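/- For every natural number N ≥ 1 and every x : Fin N → ℝ, the function β ↦ RSM_β(x) − β * log N is nonincreasing on (0, ∞), and for every β > 0 its value lies between the mean (1/N) * ∑_{l=1}^N x_l and the maximum max_{l} x_l; hence the shifted RealSoftMax interpolates monotonically between the mean and the maximum. -/

import Mathlib

/-- The shifted RealSoftMax `β ↦ RSM_β(x) - β * log N` is nonincreasing on `(0, ∞)`
and, for every `β > 0`, its value lies between the mean `(1/N) * ∑ l, x l` and the
maximum `max_l x_l`: it interpolates monotonically between the mean and the maximum. -/
theorem rsm_shifted_antitone_and_bounds (N : ℕ) (hN : 1 ≤ N) (x : Fin N → ℝ) :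
    AntitoneOn (fun β : ℝ => β * Real.log (∑ l, Real.exp (x l / β)) - β * Real.log N)
        (Set.Ioi (0 : ℝ)) ∧
      ∀ β : ℝ, 0 < β →
        (1 / (N : ℝ)) * ∑ l, x l
            ≤ β * Real.log (∑ l, Real.exp (x l / β)) - β * Real.log N ∧
          β * Real.log (∑ l, Real.exp (x l / β)) - β * Real.log N
            ≤ Finset.univ.sup' (Finset.univ_nonempty_iff.mpr ⟨⟨0, hN⟩⟩) x := by
  have hNpos : (0:ℝ) < N := by exact_mod_cast hN
  have hne : (Finset.univ : Finset (Fin N)).Nonempty := Finset.univ_nonempty_iff.mpr ⟨⟨0, hN⟩⟩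
  have hS : ∀ β : ℝ, 0 < ∑ l, Real.exp (x l / β) :=
    fun β => Finset.sum_pos (fun l _ => Real.exp_pos _) hne
  have hw' : ∑ _l : Fin N, (1 / (N:ℝ)) = 1 := by
    simp only [Finset.sum_const, Finset.card_univ, Fintype.card_fin, nsmul_eq_mul]
    field_simp
  have hrw : ∀ β : ℝ,
      β * Real.log (∑ l, Real.exp (x l / β)) - β * Real.log N
        = β * Real.log ((1 / (N:ℝ)) * ∑ l, Real.exp (x l / β)) := by
    intro β
    rw [Real.log_mul (by positivity) (hS β).ne', Real.log_div one_ne_zero hNpos.ne',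
      Real.log_one]
    ring
  constructor
  · intro a ha b hb hab
    simp only [Set.mem_Ioi] at ha hb
    show b * Real.log (∑ l, Real.exp (x l / b)) - b * Real.log N
      ≤ a * Real.log (∑ l, Real.exp (x l / a)) - a * Real.log N
    rw [hrw a, hrw b]
    have hba : 1 ≤ b / a := (one_le_div ha).mpr hab
    have key := Real.arith_mean_le_rpow_mean Finset.univ (fun _ : Fin N => 1 / (N:ℝ))
      (fun l => Real.exp (x l / b)) (fun _ _ => by positivity) hw'
      (fun l _ => (Real.exp_pos _).le) hba
    have hz : ∀ l : Fin N, Real.exp (x l / b) ^ ((b : ℝ) / a) = Real.exp (x l / a) := by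
      intro l
      rw [Real.rpow_def_of_pos (Real.exp_pos _), Real.log_exp]
      congr 1
      field_simp
    rw [← Finset.mul_sum, ← Finset.mul_sum] at key
    rw [one_div_div] at key
    simp only [hz] at key
    have hlog : Real.log ((1 / (N:ℝ)) * ∑ l, Real.exp (x l / b))
        ≤ (a / b) * Real.log ((1 / (N:ℝ)) * ∑ l, Real.exp (x l / a)) := by
      calc Real.log ((1 / (N:ℝ)) * ∑ l, Real.exp (x l / b))
          ≤ Real.log (((1 / (N:ℝ)) * ∑ l, Real.exp (x l / a)) ^ ((a:ℝ) / b)) :=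
            Real.log_le_log (by positivity) key
        _ = (a / b) * Real.log ((1 / (N:ℝ)) * ∑ l, Real.exp (x l / a)) :=
            Real.log_rpow (by positivity) _
    calc b * Real.log ((1 / (N:ℝ)) * ∑ l, Real.exp (x l / b))
        ≤ b * ((a / b) * Real.log ((1 / (N:ℝ)) * ∑ l, Real.exp (x l / a))) :=
          mul_le_mul_of_nonneg_left hlog hb.le
      _ = a * Real.log ((1 / (N:ℝ)) * ∑ l, Real.exp (x l / a)) := by
          field_simp
  · intro β hβ
    constructor
    · rw [hrw β]
      have key := Real.geom_mean_le_arith_mean_weighted Finset.univ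
        (fun _ : Fin N => 1 / (N:ℝ)) (fun l => Real.exp (x l / β))
        (fun _ _ => by positivity) hw' (fun l _ => (Real.exp_pos _).le)
      have hprod : (∏ l, Real.exp (x l / β) ^ (1 / (N:ℝ)))
          = Real.exp (((1 / (N:ℝ)) * ∑ l, x l) / β) := by
        have : ∀ l : Fin N, Real.exp (x l / β) ^ (1 / (N:ℝ))
            = Real.exp (x l / β * (1 / (N:ℝ))) := by
          intro l
          rw [Real.rpow_def_of_pos (Real.exp_pos _), Real.log_exp]
        simp only [this, ← Real.exp_sum]
        congr 1
        rw [Finset.mul_sum, Finset.sum_div]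
        exact Finset.sum_congr rfl fun l _ => by ring
      rw [hprod, ← Finset.mul_sum] at key
      have hlog := Real.log_le_log (Real.exp_pos _) key
      rw [Real.log_exp] at hlog
      have := mul_le_mul_of_nonneg_left hlog hβ.le
      calc (1 / (N:ℝ)) * ∑ l, x l
          = β * (((1 / (N:ℝ)) * ∑ l, x l) / β) := by field_simp
        _ ≤ β * Real.log ((1 / (N:ℝ)) * ∑ l, Real.exp (x l / β)) := this
    · have hsum : (1 / (N:ℝ)) * ∑ l, Real.exp (x l / β)
          ≤ Real.exp ((Finset.univ.sup' hne x) / β) := by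
        have h1 : ∑ l, Real.exp (x l / β)
            ≤ (N : ℝ) * Real.exp ((Finset.univ.sup' hne x) / β) := by
          calc ∑ l, Real.exp (x l / β)
              ≤ ∑ _l : Fin N, Real.exp ((Finset.univ.sup' hne x) / β) :=
                Finset.sum_le_sum (fun l _ => by
                  gcongr
                  exact Finset.le_sup' x (Finset.mem_univ l))
            _ = (N : ℝ) * Real.exp ((Finset.univ.sup' hne x) / β) := by
                simp [Finset.sum_const, Finset.card_univ, nsmul_eq_mul]
        calc (1 / (N:ℝ)) * ∑ l, Real.exp (x l / β)
            ≤ (1 / (N:ℝ)) * ((N : ℝ) * Real.exp ((Finset.univ.sup' hne x) / β)) := by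
              apply mul_le_mul_of_nonneg_left h1 (by positivity)
          _ = Real.exp ((Finset.univ.sup' hne x) / β) := by field_simp
      rw [hrw β]
      calc β * Real.log ((1 / (N:ℝ)) * ∑ l, Real.exp (x l / β))
          ≤ β * ((Finset.univ.sup' hne x) / β) := by
            apply mul_le_mul_of_nonneg_left _ hβ.le
            calc Real.log _ ≤ Real.log (Real.exp ((Finset.univ.sup' hne x) / β)) :=
                  Real.log_le_log (by positivity) hsum
              _ = _ := Real.log_exp _
        _ = Finset.univ.sup' hne x := by field_simp
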